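/- Let Θ ⊆ I be special, J ⊆ I, and σ ∈ ^{Θ∪Θ⊥}W^J (a minimal length double coset representative of W_{Θ∪Θ⊥}\W/W_J). Then R(Θ) ∩ σF̄_J = F̄_{Θ∪J∪red(σ)}. -/

import Mathlib

open scoped Pointwise

/-- A realization over `ℝ` of a generalized Cartan matrix `A = (a_{ij})_{i,j ∈ I}`.
The space `E` plays the role of `h_ℝ*`; `coroot i` is the linear functional
`λ ↦ λ(h_i)` of evaluation against the simple coroot `h_i`, and `root i` is the
simple root `α_i ∈ h_ℝ*`. -/
structure GCMRealization where
  I : Type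
  E : Type
  [fintypeI : Fintype I]
  [decEqI : DecidableEq I]
  [addCommGroupE : AddCommGroup E]
  [moduleE : Module ℝ E]
  [finiteDimensionalE : FiniteDimensional ℝ E]
  A : I → I → ℤ
  diag : ∀ i, A i i = 2
  offDiag_nonpos : ∀ i j, i ≠ j → A i j ≤ 0
  zero_iff : ∀ i j, A i j = 0 ↔ A j i = 0
  root : I → E
  coroot : I → E →ₗ[ℝ] ℝ
  root_indep : LinearIndependent ℝ root
  coroot_indep : LinearIndependent ℝ coroot
  pairing : ∀ i j, coroot i (root j) = (A i j : ℝ)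

set_option linter.unusedSectionVars false
set_option maxHeartbeats 1000000

attribute [instance] GCMRealization.fintypeI GCMRealization.decEqI
  GCMRealization.addCommGroupE GCMRealization.moduleE GCMRealization.finiteDimensionalE

namespace GCMRealization

variable (S : GCMRealization)

/-- The group of linear automorphisms of `E`, realized as units of the
endomorphism monoid. -/
abbrev U := (S.E →ₗ[ℝ] S.E)ˣ

/-- Application of a linear automorphism to a vector. -/
def ap (σ : S.U) (x : S.E) : S.E := σ.val x

/-- The simple reflection `σ_i : λ ↦ λ - λ(h_i) α_i` as a linear endomorphism. -/
def sMap (i : S.I) : S.E →ₗ[ℝ] S.E := LinearMap.id - (S.coroot i).smulRight (S.root i)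

lemma sMap_apply (i : S.I) (x : S.E) : S.sMap i x = x - S.coroot i x • S.root i := rfl

lemma sMap_sq (i : S.I) : S.sMap i * S.sMap i = 1 := by
  have h2 : S.coroot i (S.root i) = 2 := by
    rw [S.pairing, S.diag]; norm_num
  ext x
  rw [Module.End.mul_apply, Module.End.one_apply, sMap_apply, sMap_apply, map_sub, map_smul, h2,
    smul_eq_mul]
  have h3 : S.coroot i x - S.coroot i x * 2 = -(S.coroot i x) := by ring
  rw [h3, neg_smul, sub_neg_eq_add]
  abel

/-- The simple reflection `σ_i` as a linear automorphism. -/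
def sUnit (i : S.I) : S.U := ⟨S.sMap i, S.sMap i, S.sMap_sq i, S.sMap_sq i⟩

/-- The Weyl group `W`, generated by the simple reflections. -/
def W : Subgroup S.U := Subgroup.closure (Set.range S.sUnit)

/-- The standard parabolic subgroup `W_J`, generated by `{σ_i : i ∈ J}`. -/
def WJ (J : Set S.I) : Subgroup S.U := Subgroup.closure (S.sUnit '' J)

lemma WJ_le_W (J : Set S.I) : S.WJ J ≤ S.W :=
  Subgroup.closure_mono (Set.image_subset_range _ _)

lemma ap_mul (σ τ : S.U) (x : S.E) : S.ap (σ * τ) x = S.ap σ (S.ap τ x) := rfl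

lemma ap_one (x : S.E) : S.ap 1 x = x := rfl

/-- The closed fundamental chamber `C̄`. -/
def chamber : Set S.E := { x | ∀ i, 0 ≤ S.coroot i x }

/-- The Tits cone `X = W ⬝ C̄`. -/
def titsCone : Set S.E := { x | ∃ σ ∈ S.W, ∃ y ∈ S.chamber, x = S.ap σ y }

/-- The open facet `F_J` of type `J`. -/
def openFacet (J : Set S.I) : Set S.E :=
  { x | (∀ i ∈ J, S.coroot i x = 0) ∧ ∀ i, i ∉ J → 0 < S.coroot i x }

/-- The closed facet `F̄_J` of type `J`. -/
def closedFacet (J : Set S.I) : Set S.E :=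
  { x | (∀ i ∈ J, S.coroot i x = 0) ∧ ∀ i, i ∉ J → 0 ≤ S.coroot i x }

/-- A face of the Tits cone, in the sense of convex geometry: an extreme convex
subcone of the convex cone `X`. -/
def IsFace (F : Set S.E) : Prop :=
  Convex ℝ F ∧ (∀ c : ℝ, 0 ≤ c → ∀ x ∈ F, c • x ∈ F) ∧ IsExtreme ℝ S.titsCone F

/-- The set `Fa(X)` of faces of the Tits cone. -/
def faces : Set (Set S.E) := { F | S.IsFace F }

lemma faces_subset {F : Set S.E} (h : F ∈ S.faces) : F ⊆ S.titsCone := h.2.2.1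

/-- Two indices of `Θ` are linked if they are joined by an edge of the Coxeter
diagram of the submatrix `A_Θ`. -/
def connRel (Θ : Set S.I) (i j : S.I) : Prop := i ∈ Θ ∧ j ∈ Θ ∧ S.A i j ≠ 0

/-- The index set of the connected component of `i` in the submatrix `A_Θ`. -/
def component (Θ : Set S.I) (i : S.I) : Set S.I :=
  { j | j ∈ Θ ∧ Relation.ReflTransGen (S.connRel Θ) i j }

/-- A subset `K ⊆ I` is of finite type iff its Weyl group `W_K` is finite. -/
def finType (K : Set S.I) : Prop := Finite (S.WJ K)

/-- `Θ^∞`: the union of the index sets of the connected components of `A_Θ` of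
non-finite type. -/
def infpart (Θ : Set S.I) : Set S.I := { i | i ∈ Θ ∧ ¬ S.finType (S.component Θ i) }

/-- `Θ⁰`: the union of the index sets of the connected components of `A_Θ` of
finite type. -/
def finpart (Θ : Set S.I) : Set S.I := { i | i ∈ Θ ∧ S.finType (S.component Θ i) }

/-- `Θ` is special if `Θ = Θ^∞`. -/
def special (Θ : Set S.I) : Prop := S.infpart Θ = Θ

/-- `J⊥ = { i ∈ I : a_{ij} = 0 for all j ∈ J }`. -/
def perp (J : Set S.I) : Set S.I := { i | ∀ j ∈ J, S.A i j = 0 }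

/-- The special face `R(Θ) = W_{Θ⊥} ⬝ F̄_Θ` of the Tits cone. -/
def faceR (Θ : Set S.I) : Set S.E :=
  { x | ∃ σ ∈ S.WJ (S.perp Θ), ∃ y ∈ S.closedFacet Θ, x = S.ap σ y }

lemma closedFacet_subset_chamber (J : Set S.I) : S.closedFacet J ⊆ S.chamber := by
  intro x hx i
  by_cases hi : i ∈ J
  · exact le_of_eq (hx.1 i hi).symm
  · exact hx.2 i hi

lemma chamber_subset_titsCone : S.chamber ⊆ S.titsCone :=
  fun x hx => ⟨1, one_mem _, x, hx, rfl⟩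

lemma ap_mem_titsCone {σ : S.U} (hσ : σ ∈ S.W) {x : S.E} (hx : x ∈ S.titsCone) :
    S.ap σ x ∈ S.titsCone := by
  obtain ⟨τ, hτ, y, hy, rfl⟩ := hx
  exact ⟨σ * τ, mul_mem hσ hτ, y, hy, rfl⟩

lemma faceR_subset (Θ : Set S.I) : S.faceR Θ ⊆ S.titsCone := by
  rintro x ⟨σ, hσ, y, hy, rfl⟩
  exact S.ap_mem_titsCone (S.WJ_le_W _ hσ)
    (S.chamber_subset_titsCone (S.closedFacet_subset_chamber Θ hy))

/-- The product of the word `l` in the simple reflections. -/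
def wordProd (l : List S.I) : S.U := (l.map S.sUnit).prod

/-- The length of an element of the Weyl group: the length of a shortest
expression as a product of simple reflections. -/
noncomputable def length (σ : S.U) : ℕ :=
  sInf { n | ∃ l : List S.I, l.length = n ∧ S.wordProd l = σ }

/-- `l` is a reduced expression of `σ`. -/
def IsReduced (l : List S.I) (σ : S.U) : Prop :=
  S.wordProd l = σ ∧ l.length = S.length σ

/-- `red σ`: the set of indices of simple reflections occurring in a reduced
expression of `σ` (by a result of J. Tits this set does not depend on the
choice of reduced expression). -/
def red (σ : S.U) : Set S.I := { i | ∃ l : List S.I, S.IsReduced l σ ∧ i ∈ l }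

/-- `W^J`: the minimal length representatives of the cosets `W/W_J`. -/
def minRight (J : Set S.I) : Set S.U :=
  { σ | σ ∈ S.W ∧ ∀ τ ∈ S.WJ J, S.length σ ≤ S.length (σ * τ) }

/-- `^K W`: the minimal length representatives of the cosets `W_K\W`. -/
def minLeft (K : Set S.I) : Set S.U :=
  { σ | σ ∈ S.W ∧ ∀ κ ∈ S.WJ K, S.length σ ≤ S.length (κ * σ) }

/-- `^K W^J`: the minimal length representatives of the double cosets
`W_K\W/W_J`. -/
def minDouble (K J : Set S.I) : Set S.U :=
  { σ | σ ∈ S.W ∧ ∀ κ ∈ S.WJ K, ∀ τ ∈ S.WJ J, S.length σ ≤ S.length (κ * σ * τ) }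

/-- `(W_L)^{J'}`: the minimal length representatives within `W_L` of the cosets
`W_L/W_{J'}`. -/
def minRightIn (L J' : Set S.I) : Set S.U :=
  { σ | σ ∈ S.WJ L ∧ ∀ τ ∈ S.WJ J', S.length σ ≤ S.length (σ * τ) }

/-- Pairs `(σ, R)` with `σ ∈ W` and `R ⊆ X`, the raw material for the face
monoid: `(σ, R)` represents the element `σ ε(R)`. -/
structure PreHat (S : GCMRealization) where
  w : S.W
  carrier : Set S.E
  subX : carrier ⊆ S.titsCone

lemma PreHat.ext' : ∀ {p q : S.PreHat}, p.w = q.w → p.carrier = q.carrier → p = q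
  | ⟨_, _, _⟩, ⟨_, _, _⟩, h1, h2 => by cases h1; cases h2; rfl

instance : One S.PreHat := ⟨⟨1, S.titsCone, subset_rfl⟩⟩

/-- The semidirect product multiplication `(σ, R)(τ, T) = (στ, τ⁻¹R ∩ T)`. -/
instance : Mul S.PreHat :=
  ⟨fun p q => ⟨p.w * q.w, S.ap ↑q.w ⁻¹' p.carrier ∩ q.carrier,
    fun _ hx => q.subX hx.2⟩⟩

lemma PreHat.mul_w (p q : S.PreHat) : (p * q).w = p.w * q.w := rfl

lemma PreHat.mul_carrier (p q : S.PreHat) :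
    (p * q).carrier = S.ap ↑q.w ⁻¹' p.carrier ∩ q.carrier := rfl

lemma PreHat.one_w : (1 : S.PreHat).w = 1 := rfl

lemma PreHat.one_carrier : (1 : S.PreHat).carrier = S.titsCone := rfl

instance : Monoid S.PreHat where
  mul_assoc p q r := by
    refine PreHat.ext' S (mul_assoc _ _ _) ?_
    ext x
    simp only [PreHat.mul_carrier, PreHat.mul_w, Set.mem_inter_iff, Set.mem_preimage,
      Subgroup.coe_mul, S.ap_mul]
    tauto
  one_mul p := by
    refine PreHat.ext' S (one_mul _) ?_
    ext x
    simp only [PreHat.mul_carrier, PreHat.one_carrier, Set.mem_inter_iff, Set.mem_preimage]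
    exact ⟨fun h => h.2, fun h => ⟨S.ap_mem_titsCone p.w.2 (p.subX h), h⟩⟩
  mul_one p := by
    refine PreHat.ext' S (mul_one _) ?_
    ext x
    simp only [PreHat.mul_carrier, PreHat.one_carrier, Set.mem_inter_iff, Set.mem_preimage,
      OneMemClass.coe_one, S.ap_one]
    exact ⟨fun h => h.1, fun h => ⟨h, p.subX h⟩⟩

/-- The congruence relation `σ ε(R) = σ' ε(R') ⟺ R = R'` and `σ⁻¹σ'` fixes `R`
pointwise. -/
def hatCon : Con S.PreHat where
  r p q := p.carrier = q.carrier ∧ ∀ x ∈ p.carrier, S.ap ↑p.w x = S.ap ↑q.w x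
  iseqv :=
    { refl := fun p => ⟨rfl, fun _ _ => rfl⟩
      symm := fun {p q} h => ⟨h.1.symm, fun x hx => (h.2 x (h.1 ▸ hx)).symm⟩
      trans := fun {p q r} h h' =>
        ⟨h.1.trans h'.1, fun x hx => (h.2 x hx).trans (h'.2 x (h.1 ▸ hx))⟩ }
  mul' := by
    rintro p p' q q' ⟨hc, hw⟩ ⟨hc', hw'⟩
    constructor
    · ext x
      simp only [PreHat.mul_carrier, Set.mem_inter_iff, Set.mem_preimage]
      constructor
      · rintro ⟨h1, h2⟩
        exact ⟨by rw [← hw' x h2, ← hc]; exact h1, hc' ▸ h2⟩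
      · rintro ⟨h1, h2⟩
        have h2' : x ∈ q.carrier := hc' ▸ h2
        exact ⟨by rw [hc, hw' x h2']; exact h1, h2'⟩
    · rintro x ⟨h1, h2⟩
      simp only [PreHat.mul_w, Subgroup.coe_mul, S.ap_mul]
      rw [hw _ h1, hw' x h2]

/-- The monoid in which the face monoid `Ŵ` lives: the quotient of the
semidirect product by the congruence. -/
def FM := S.hatCon.Quotient

noncomputable instance : Monoid S.FM := by unfold FM; infer_instance

/-- The class of the pair `(σ, R)` in the quotient. -/
def fmk (p : S.PreHat) : S.FM := S.hatCon.mk' p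

/-- The element `σ = σ ε(X)` of the face monoid. -/
def wEl (σ : S.W) : S.FM := S.fmk ⟨σ, S.titsCone, subset_rfl⟩

/-- The idempotent `ε(R)` for `R ⊆ X`. -/
def eps (R : Set S.E) (h : R ⊆ S.titsCone) : S.FM := S.fmk ⟨1, R, h⟩

/-- The idempotent `ε(R(Θ))`. -/
def faceEl (Θ : Set S.I) : S.FM := S.eps (S.faceR Θ) (S.faceR_subset Θ)

/-- The element `σ ε(R)` of the face monoid. -/
def genEl (σ : S.W) (R : Set S.E) (h : R ⊆ S.titsCone) : S.FM := S.fmk ⟨σ, R, h⟩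

/-- The image of the Weyl group `W` in the face monoid. -/
def Wset : Set S.FM := Set.range S.wEl

/-- The set `E = {ε(R) : R ∈ Fa(X)}` of idempotents of the face monoid. -/
def Eset : Set S.FM := { x | ∃ R, ∃ h : R ∈ S.faces, x = S.eps R (S.faces_subset h) }

/-- The face monoid `Ŵ` associated to the Weyl group `W`: the submonoid
generated by `W` and the idempotents `ε(R)`, `R` a face of the Tits cone;
its elements are exactly the `σ ε(R)` with `σ ∈ W` and `R ∈ Fa(X)`. -/
noncomputable def hatW : Submonoid S.FM := Submonoid.closure (S.Wset ∪ S.Eset)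

/-- The image of the parabolic subgroup `W_J` in the face monoid. -/
def WJset (J : Set S.I) : Set S.FM :=
  { x | ∃ σ, ∃ h : σ ∈ S.WJ J, x = S.wEl ⟨σ, S.WJ_le_W J h⟩ }

/-- The set `E_J = {ε(R) : R ∈ Fa(X), R ⊇ R(J^∞)}`. -/
def EJset (J : Set S.I) : Set S.FM :=
  { x | ∃ R, ∃ h : R ∈ S.faces, S.faceR (S.infpart J) ⊆ R ∧ x = S.eps R (S.faces_subset h) }

/-- The standard parabolic submonoid `Ŵ_J = W_J ⬝ E_J` of the face monoid. -/
def hatWJ (J : Set S.I) : Set S.FM := S.WJset J * S.EJset J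

/-- The coset `σ W_J`, an element of the Coxeter complex. -/
def coset (σ : S.U) (J : Set S.I) : Set S.U := { τ | ∃ w ∈ S.WJ J, τ = σ * w }

/-- The Coxeter complex `C = {σ W_J : σ ∈ W, J ⊆ I}`, partially ordered by
reverse inclusion. -/
def Cox : Set (Set S.U) := { c | ∃ σ ∈ S.W, ∃ J : Set S.I, c = S.coset σ J }

/-- Left translation, giving the action of `W` on the Coxeter complex. -/
def lmul (σ : S.U) (c : Set S.U) : Set S.U := (fun τ => σ * τ) '' c

/-- `W_Θ↓ = {V ∈ C : V ≤ W_Θ} = {V ∈ C : V ⊇ W_Θ}`. -/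
def downW (Θ : Set S.I) : Set (Set S.U) := { V | V ∈ S.Cox ∧ S.coset 1 Θ ⊆ V }

/-- The set of cosets `W_{Θ⊥} ⬝ (W_Θ↓)`. -/
def dSet (Θ : Set S.I) : Set (Set S.U) :=
  { c | ∃ a ∈ S.WJ (S.perp Θ), ∃ V ∈ S.downW Θ, c = S.lmul a V }

end GCMRealization

namespace GCMRealization


/-! ### Auxiliary development: words and lengths -/

section Words

variable (S : GCMRealization)

lemma sUnit_inv (i : S.I) : (S.sUnit i)⁻¹ = S.sUnit i := Units.ext rfl

lemma sUnit_mul_self (i : S.I) : S.sUnit i * S.sUnit i = 1 :=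
  Units.ext (S.sMap_sq i)

lemma ap_sUnit (i : S.I) (x : S.E) :
    S.ap (S.sUnit i) x = x - S.coroot i x • S.root i := rfl

lemma ap_sUnit_fix {i : S.I} {x : S.E} (h : S.coroot i x = 0) :
    S.ap (S.sUnit i) x = x := by
  rw [ap_sUnit, h, zero_smul, sub_zero]

lemma sUnit_mem_W (i : S.I) : S.sUnit i ∈ S.W :=
  Subgroup.subset_closure ⟨i, rfl⟩

lemma wordProd_nil : S.wordProd ([] : List S.I) = 1 := rfl

lemma wordProd_cons (i : S.I) (l : List S.I) :
    S.wordProd (i :: l) = S.sUnit i * S.wordProd l := by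
  simp [wordProd]

lemma wordProd_append (l l' : List S.I) :
    S.wordProd (l ++ l') = S.wordProd l * S.wordProd l' := by
  simp [wordProd]

lemma wordProd_concat (l : List S.I) (i : S.I) :
    S.wordProd (l ++ [i]) = S.wordProd l * S.sUnit i := by
  simp [wordProd]

lemma wordProd_singleton (i : S.I) : S.wordProd [i] = S.sUnit i := by
  simp [wordProd]

lemma wordProd_mem_W (l : List S.I) : S.wordProd l ∈ S.W := by
  induction l with
  | nil => exact one_mem _
  | cons i l ih => rw [wordProd_cons]; exact mul_mem (S.sUnit_mem_W i) ih

lemma wordProd_mem_WJ {Q : Set S.I} {l : List S.I} (h : ∀ i ∈ l, i ∈ Q) :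
    S.wordProd l ∈ S.WJ Q := by
  induction l with
  | nil => exact one_mem _
  | cons i l ih =>
    rw [wordProd_cons]
    exact mul_mem (Subgroup.subset_closure ⟨i, h i (by simp), rfl⟩)
      (ih fun j hj => h j (by simp [hj]))

lemma wordProd_reverse (l : List S.I) :
    S.wordProd l.reverse = (S.wordProd l)⁻¹ := by
  induction l with
  | nil => simp [wordProd]
  | cons i l ih =>
    rw [List.reverse_cons, wordProd_concat, ih, wordProd_cons, mul_inv_rev, sUnit_inv]

lemma mem_W_iff {u : S.U} : u ∈ S.W ↔ ∃ l : List S.I, S.wordProd l = u := by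
  constructor
  · intro hu
    refine Subgroup.closure_induction ?_ ?_ ?_ ?_ hu
    · rintro _ ⟨i, rfl⟩; exact ⟨[i], S.wordProd_singleton i⟩
    · exact ⟨[], rfl⟩
    · rintro x y _ _ ⟨l, rfl⟩ ⟨l', rfl⟩; exact ⟨l ++ l', S.wordProd_append l l'⟩
    · rintro x _ ⟨l, rfl⟩; exact ⟨l.reverse, S.wordProd_reverse l⟩
  · rintro ⟨l, rfl⟩; exact S.wordProd_mem_W l

lemma mem_WJ_iff {Q : Set S.I} {u : S.U} :
    u ∈ S.WJ Q ↔ ∃ l : List S.I, (∀ i ∈ l, i ∈ Q) ∧ S.wordProd l = u := by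
  constructor
  · intro hu
    refine Subgroup.closure_induction ?_ ?_ ?_ ?_ hu
    · rintro _ ⟨i, hi, rfl⟩
      exact ⟨[i], by simpa using hi, S.wordProd_singleton i⟩
    · exact ⟨[], by simp, rfl⟩
    · rintro x y _ _ ⟨l, hl, rfl⟩ ⟨l', hl', rfl⟩
      refine ⟨l ++ l', ?_, S.wordProd_append l l'⟩
      intro i hi; rcases List.mem_append.1 hi with h | h
      exacts [hl i h, hl' i h]
    · rintro x _ ⟨l, hl, rfl⟩
      exact ⟨l.reverse, fun i hi => hl i (List.mem_reverse.1 hi), S.wordProd_reverse l⟩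
  · rintro ⟨l, hl, rfl⟩; exact S.wordProd_mem_WJ hl

lemma length_le_word {u : S.U} {l : List S.I} (h : S.wordProd l = u) :
    S.length u ≤ l.length :=
  Nat.sInf_le ⟨l, rfl, h⟩

lemma exists_reduced_word {u : S.U} (hu : u ∈ S.W) :
    ∃ l : List S.I, S.wordProd l = u ∧ l.length = S.length u := by
  obtain ⟨l, hl⟩ := S.mem_W_iff.1 hu
  have hne : {n | ∃ l : List S.I, l.length = n ∧ S.wordProd l = u}.Nonempty :=
    ⟨l.length, l, rfl, hl⟩
  obtain ⟨l', h1, h2⟩ := Nat.sInf_mem hne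
  exact ⟨l', h2, h1⟩

lemma length_one : S.length (1 : S.U) = 0 :=
  Nat.le_zero.1 (by simpa using S.length_le_word (l := []) (u := 1) rfl)

lemma eq_one_of_length_eq_zero {u : S.U} (hu : u ∈ S.W) (h : S.length u = 0) :
    u = 1 := by
  obtain ⟨l, hl, hlen⟩ := S.exists_reduced_word hu
  rw [h, List.length_eq_zero_iff] at hlen
  rw [← hl, hlen]; rfl

lemma length_mul_word_le {u : S.U} (hu : u ∈ S.W) (l : List S.I) :
    S.length (u * S.wordProd l) ≤ S.length u + l.length := by
  obtain ⟨lu, hlu, hlen⟩ := S.exists_reduced_word hu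
  have : S.wordProd (lu ++ l) = u * S.wordProd l := by
    rw [wordProd_append, hlu]
  simpa [hlen] using S.length_le_word this

lemma length_mul_sUnit_le {u : S.U} (hu : u ∈ S.W) (i : S.I) :
    S.length (u * S.sUnit i) ≤ S.length u + 1 := by
  simpa [S.wordProd_singleton i] using S.length_mul_word_le hu [i]

lemma length_le_mul_sUnit {u : S.U} (hu : u ∈ S.W) (i : S.I) :
    S.length u ≤ S.length (u * S.sUnit i) + 1 := by
  have h := S.length_mul_sUnit_le (mul_mem hu (S.sUnit_mem_W i)) i
  rwa [mul_assoc, S.sUnit_mul_self i, mul_one] at h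

lemma length_inv_le {u : S.U} (hu : u ∈ S.W) : S.length u⁻¹ ≤ S.length u := by
  obtain ⟨l, hl, hlen⟩ := S.exists_reduced_word hu
  have : S.wordProd l.reverse = u⁻¹ := by rw [S.wordProd_reverse, hl]
  simpa [hlen] using S.length_le_word this

lemma length_inv {u : S.U} (hu : u ∈ S.W) : S.length u⁻¹ = S.length u := by
  refine le_antisymm (S.length_inv_le hu) ?_
  have := S.length_inv_le (inv_mem hu)
  simpa using this

end Words


/-! ### Positive cones -/

section Cone

variable {ι : Type} [Fintype ι] [DecidableEq ι] {M : Type} [AddCommGroup M] [Module ℝ M]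

/-- The cone of nonnegative combinations of a family of vectors. -/
def posCone (v : ι → M) : Set M :=
  { x | ∃ c : ι → ℝ, (∀ i, 0 ≤ c i) ∧ x = ∑ i, c i • v i }

lemma self_mem_posCone (v : ι → M) (i : ι) : v i ∈ posCone v := by
  refine ⟨fun j => if j = i then 1 else 0, fun j => by positivity, ?_⟩
  simp [ite_smul]

lemma zero_mem_posCone (v : ι → M) : (0 : M) ∈ posCone v :=
  ⟨0, fun _ => le_rfl, by simp⟩

lemma add_mem_posCone {v : ι → M} {x y : M} (hx : x ∈ posCone v) (hy : y ∈ posCone v) :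
    x + y ∈ posCone v := by
  obtain ⟨c, hc, rfl⟩ := hx
  obtain ⟨d, hd, rfl⟩ := hy
  exact ⟨c + d, fun i => add_nonneg (hc i) (hd i), by
    simp [add_smul, Finset.sum_add_distrib]⟩

lemma smul_mem_posCone {v : ι → M} {x : M} {r : ℝ} (hr : 0 ≤ r) (hx : x ∈ posCone v) :
    r • x ∈ posCone v := by
  obtain ⟨c, hc, rfl⟩ := hx
  exact ⟨r • c, fun i => mul_nonneg hr (hc i), by
    simp [Finset.smul_sum, smul_smul]⟩

lemma sum_mem_posCone {v : ι → M} {κ : Type*} (s : Finset κ) (f : κ → M)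
    (h : ∀ k ∈ s, f k ∈ posCone v) : ∑ k ∈ s, f k ∈ posCone v := by
  classical
  induction s using Finset.induction_on with
  | empty => simpa using zero_mem_posCone v
  | insert _ _ hk ih =>
    rw [Finset.sum_insert hk]
    exact add_mem_posCone (h _ (Finset.mem_insert_self _ _))
      (ih fun k hks => h k (Finset.mem_insert_of_mem hks))

lemma coords_unique {v : ι → M} (hv : LinearIndependent ℝ v) {c d : ι → ℝ}
    (h : ∑ i, c i • v i = ∑ i, d i • v i) : c = d := by
  have h0 : ∑ i, (c i - d i) • v i = 0 := by
    simp only [sub_smul, Finset.sum_sub_distrib, h, sub_self]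
  funext i
  have := Fintype.linearIndependent_iff.1 hv (fun i => c i - d i) h0 i
  linarith

lemma eq_zero_of_mem_posCone_of_neg_mem {v : ι → M} (hv : LinearIndependent ℝ v) {x : M}
    (hx : x ∈ posCone v) (hx' : -x ∈ posCone v) : x = 0 := by
  obtain ⟨c, hc, rfl⟩ := hx
  obtain ⟨d, hd, h⟩ := hx'
  have hsum : ∑ i, c i • v i = ∑ i, (-d) i • v i := by
    rw [← neg_eq_iff_eq_neg.2 h.symm]
    simp [neg_smul]
  have := coords_unique hv hsum
  have hc0 : ∀ i, c i = 0 := by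
    intro i
    have h1 : c i = -d i := congrFun this i
    have := hd i; have := hc i; linarith
  simp only [funext hc0]
  simp

end Cone


/-! ### Alternating words and rank-2 computations -/

/-- The Chebyshev-like integer coordinate sequences for rank 2. -/
def pqSeq (a b : ℤ) : ℕ → ℤ × ℤ
  | 0 => (1, 0)
  | n + 1 =>
    let p := (pqSeq a b n).1
    let q := (pqSeq a b n).2
    if n % 2 = 0 then (p, b * p - q) else (a * q - p, q)

section Alt

variable (S : GCMRealization)

lemma sUnit_val (i : S.I) : (S.sUnit i).val = S.sMap i := rfl

end Alt

/-- The alternating word of length `n` in `s`, `t` with rightmost letter `t`. -/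
def altW (S : GCMRealization) (s t : S.I) : ℕ → List S.I
  | 0 => []
  | n + 1 => altW S t s n ++ [t]

section Alt2

variable (S : GCMRealization)

lemma altW_zero (s t : S.I) : S.altW s t 0 = [] := rfl

lemma altW_succ (s t : S.I) (n : ℕ) : S.altW s t (n + 1) = S.altW t s n ++ [t] := rfl

lemma altW_length (s t : S.I) (n : ℕ) : (S.altW s t n).length = n := by
  induction n generalizing s t with
  | zero => rfl
  | succ n ih => rw [altW_succ]; simp [ih]

lemma altW_cons (s t : S.I) (n : ℕ) :
    S.altW s t (n + 1) = (if n % 2 = 0 then t else s) :: S.altW s t n := by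
  induction n generalizing s t with
  | zero => rfl
  | succ n ih =>
    rw [altW_succ, ih t s, altW_succ]
    have : (n + 1) % 2 = 0 ↔ ¬ (n % 2 = 0) := by omega
    rcases Nat.even_or_odd n with h | h
    · have h0 : n % 2 = 0 := Nat.even_iff.1 h
      have h1 : (n + 1) % 2 ≠ 0 := by omega
      simp [h0, h1]
    · have h0 : n % 2 ≠ 0 := by have := Nat.odd_iff.1 h; omega
      have h1 : (n + 1) % 2 = 0 := by have := Nat.odd_iff.1 h; omega
      simp [h0, h1]

lemma altW_coord (s t : S.I) (n : ℕ) :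
    S.ap (S.wordProd (S.altW s t n)) (S.root s)
      = ((pqSeq (-(S.A s t)) (-(S.A t s)) n).1 : ℝ) • S.root s
        + ((pqSeq (-(S.A s t)) (-(S.A t s)) n).2 : ℝ) • S.root t := by
  have cst : S.coroot s (S.root t) = ((S.A s t : ℤ) : ℝ) := S.pairing s t
  have cts : S.coroot t (S.root s) = ((S.A t s : ℤ) : ℝ) := S.pairing t s
  have css : S.coroot s (S.root s) = 2 := by rw [S.pairing, S.diag]; norm_num
  have ctt : S.coroot t (S.root t) = 2 := by rw [S.pairing, S.diag]; norm_num
  induction n with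
  | zero =>
    rw [altW_zero, wordProd_nil, ap_one]
    simp [pqSeq]
  | succ n ih =>
    rw [S.altW_cons, S.wordProd_cons, S.ap_mul, ih, S.ap_sUnit]
    by_cases h : n % 2 = 0
    · simp only [h, if_true, pqSeq, map_add, map_smul, smul_eq_mul, cst, cts, css, ctt]
      push_cast
      module
    · simp only [h, if_false, pqSeq, map_add, map_smul, smul_eq_mul, cst, cts, css, ctt]
      push_cast
      module

end Alt2


/-! ### Braid relations in ranks 2 -/

section Braid

variable (S : GCMRealization)

lemma braid2 {s t : S.I} (h1 : S.A s t = 0) (h2 : S.A t s = 0) :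
    S.sUnit s * S.sUnit t = S.sUnit t * S.sUnit s := by
  have cst : S.coroot s (S.root t) = 0 := by rw [S.pairing, h1]; norm_num
  have cts : S.coroot t (S.root s) = 0 := by rw [S.pairing, h2]; norm_num
  have css : S.coroot s (S.root s) = 2 := by rw [S.pairing, S.diag]; norm_num
  have ctt : S.coroot t (S.root t) = 2 := by rw [S.pairing, S.diag]; norm_num
  refine Units.ext (LinearMap.ext fun x => ?_)
  simp only [Units.val_mul, sUnit_val, Module.End.mul_apply, sMap_apply, map_sub, map_smul,
    smul_eq_mul, cst, cts, css, ctt]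
  module

lemma braid3 {s t : S.I} (h1 : S.A s t = -1) (h2 : S.A t s = -1) :
    S.sUnit t * S.sUnit s * S.sUnit t = S.sUnit s * S.sUnit t * S.sUnit s := by
  have cst : S.coroot s (S.root t) = -1 := by rw [S.pairing, h1]; norm_num
  have cts : S.coroot t (S.root s) = -1 := by rw [S.pairing, h2]; norm_num
  have css : S.coroot s (S.root s) = 2 := by rw [S.pairing, S.diag]; norm_num
  have ctt : S.coroot t (S.root t) = 2 := by rw [S.pairing, S.diag]; norm_num
  refine Units.ext (LinearMap.ext fun x => ?_)
  simp only [Units.val_mul, sUnit_val, Module.End.mul_apply, sMap_apply, map_sub, map_smul,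
    smul_eq_mul, cst, cts, css, ctt]
  module

lemma braid4 {s t : S.I} (h1 : S.A s t = -1) (h2 : S.A t s = -2) :
    S.sUnit s * S.sUnit t * S.sUnit s * S.sUnit t
      = S.sUnit t * S.sUnit s * S.sUnit t * S.sUnit s := by
  have cst : S.coroot s (S.root t) = -1 := by rw [S.pairing, h1]; norm_num
  have cts : S.coroot t (S.root s) = -2 := by rw [S.pairing, h2]; norm_num
  have css : S.coroot s (S.root s) = 2 := by rw [S.pairing, S.diag]; norm_num
  have ctt : S.coroot t (S.root t) = 2 := by rw [S.pairing, S.diag]; norm_num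
  refine Units.ext (LinearMap.ext fun x => ?_)
  simp only [Units.val_mul, sUnit_val, Module.End.mul_apply, sMap_apply, map_sub, map_smul,
    smul_eq_mul, cst, cts, css, ctt]
  module

lemma braid6 {s t : S.I} (h1 : S.A s t = -1) (h2 : S.A t s = -3) :
    S.sUnit s * S.sUnit t * S.sUnit s * S.sUnit t * S.sUnit s * S.sUnit t
      = S.sUnit t * S.sUnit s * S.sUnit t * S.sUnit s * S.sUnit t * S.sUnit s := by
  have cst : S.coroot s (S.root t) = -1 := by rw [S.pairing, h1]; norm_num
  have cts : S.coroot t (S.root s) = -3 := by rw [S.pairing, h2]; norm_num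
  have css : S.coroot s (S.root s) = 2 := by rw [S.pairing, S.diag]; norm_num
  have ctt : S.coroot t (S.root t) = 2 := by rw [S.pairing, S.diag]; norm_num
  refine Units.ext (LinearMap.ext fun x => ?_)
  simp only [Units.val_mul, sUnit_val, Module.End.mul_apply, sMap_apply, map_sub, map_smul,
    smul_eq_mul, cst, cts, css, ctt]
  module

end Braid


/-! ### The rank-2 alternative -/

lemma pqSeq_nonneg_of_big {a b : ℤ} (ha : 0 ≤ a) (hb : 0 ≤ b) (hab : 4 ≤ a * b) (n : ℕ) :
    0 ≤ (pqSeq a b n).1 ∧ 0 ≤ (pqSeq a b n).2 ∧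
      (n % 2 = 0 → 2 * (pqSeq a b n).2 ≤ b * (pqSeq a b n).1) ∧
      (n % 2 = 1 → 2 * (pqSeq a b n).1 ≤ a * (pqSeq a b n).2) := by
  induction n with
  | zero =>
    refine ⟨by norm_num [pqSeq], by norm_num [pqSeq], ?_, ?_⟩ <;> intro h <;>
      simp only [pqSeq] <;> omega
  | succ n ih =>
    obtain ⟨h1, h2, h3, h4⟩ := ih
    by_cases h : n % 2 = 0
    · have hmod : (n + 1) % 2 = 1 := by omega
      have h3' := h3 h
      simp only [pqSeq, h, if_true, hmod]
      refine ⟨h1, by nlinarith, by omega, fun _ => by nlinarith⟩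
    · have hn1 : n % 2 = 1 := by omega
      have hmod : (n + 1) % 2 = 0 := by omega
      have h4' := h4 hn1
      simp only [pqSeq, h, if_false, hmod]
      refine ⟨by nlinarith, h2, fun _ => by nlinarith, by omega⟩

section Rank2

variable (S : GCMRealization)

lemma altW_split (s t : S.I) (m k : ℕ) :
    S.altW s t (k + m) = (if m % 2 = 0 then S.altW s t k else S.altW t s k) ++ S.altW s t m := by
  induction k with
  | zero => by_cases h : m % 2 = 0 <;> simp [h, altW_zero]
  | succ k ih =>
    have : k + 1 + m = (k + m) + 1 := by omega
    rw [this, S.altW_cons, ih, S.altW_cons, S.altW_cons]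
    by_cases hm : m % 2 = 0
    · have : (k + m) % 2 = 0 ↔ k % 2 = 0 := by omega
      by_cases hk : k % 2 = 0
      · simp [hm, hk, this.2 hk]
      · have : (k + m) % 2 ≠ 0 := by omega
        simp [hm, hk, this]
    · by_cases hk : k % 2 = 0
      · have h2 : (k + m) % 2 ≠ 0 := by omega
        simp [hm, hk, h2]
      · have h2 : (k + m) % 2 = 0 := by omega
        simp [hm, hk, h2]

lemma shorten (s t : S.I) (m n : ℕ) (hm : 1 ≤ m) (hn : m ≤ n)
    (hbraid : S.wordProd (S.altW s t m) = S.wordProd (S.altW t s m)) :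
    ∃ l : List S.I, l.length + 1 ≤ n ∧
      S.wordProd l = S.wordProd (S.altW s t n) * S.sUnit s := by
  obtain ⟨k, rfl⟩ : ∃ k, n = k + m := ⟨n - m, by omega⟩
  obtain ⟨m', rfl⟩ : ∃ m', m = m' + 1 := ⟨m - 1, by omega⟩
  refine ⟨(if (m' + 1) % 2 = 0 then S.altW s t k else S.altW t s k) ++ S.altW s t m', ?_, ?_⟩
  · rw [List.length_append, S.altW_length]
    have : (if (m' + 1) % 2 = 0 then S.altW s t k else S.altW t s k).length = k := by
      by_cases h : (m' + 1) % 2 = 0 <;> simp [h, S.altW_length]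
    omega
  · rw [S.altW_split s t (m' + 1) k, S.wordProd_append, S.wordProd_append, hbraid,
      S.altW_succ t s m', S.wordProd_concat, mul_assoc, mul_assoc,
      S.sUnit_mul_self, mul_one]

/-- The key rank-2 alternative: either the alternating word keeps `α_s` in the
positive cone of the rank-2 subsystem, or multiplying by `s` shortens it. -/
lemma rank2_alternative (s t : S.I) (hst : s ≠ t) (n : ℕ) :
    (∃ p q : ℝ, 0 ≤ p ∧ 0 ≤ q ∧
      S.ap (S.wordProd (S.altW s t n)) (S.root s) = p • S.root s + q • S.root t)
    ∨ (∃ l : List S.I, l.length + 1 ≤ n ∧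
        S.wordProd l = S.wordProd (S.altW s t n) * S.sUnit s) := by
  set a : ℤ := -(S.A s t) with ha_def
  set b : ℤ := -(S.A t s) with hb_def
  have ha : 0 ≤ a := by simp [ha_def]; exact S.offDiag_nonpos s t hst
  have hb : 0 ≤ b := by simp [hb_def]; exact S.offDiag_nonpos t s hst.symm
  have hiff : a = 0 ↔ b = 0 := by
    simp only [ha_def, hb_def, neg_eq_zero]
    exact S.zero_iff s t
  have hpos : ∀ (hp : 0 ≤ (pqSeq a b n).1) (hq : 0 ≤ (pqSeq a b n).2),
      (∃ p q : ℝ, 0 ≤ p ∧ 0 ≤ q ∧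
        S.ap (S.wordProd (S.altW s t n)) (S.root s) = p • S.root s + q • S.root t) := by
    intro hp hq
    exact ⟨((pqSeq a b n).1 : ℝ), ((pqSeq a b n).2 : ℝ), by exact_mod_cast hp,
      by exact_mod_cast hq, S.altW_coord s t n⟩
  by_cases h4 : 4 ≤ a * b
  · obtain ⟨h1, h2, -, -⟩ := pqSeq_nonneg_of_big ha hb h4 n
    exact Or.inl (hpos h1 h2)
  · by_cases hb0 : b = 0
    · -- case (0,0), m = 2
      have ha0 : a = 0 := hiff.2 hb0
      rcases Nat.lt_or_ge n 2 with hn | hn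
      · refine Or.inl (hpos ?_ ?_) <;> interval_cases n <;>
          simp [pqSeq, ha0, hb0]
      · refine Or.inr (S.shorten s t 2 n (by norm_num) hn ?_)
        have hst' : S.A s t = 0 := by omega
        have hts' : S.A t s = 0 := by omega
        show S.wordProd (S.altW s t 2) = S.wordProd (S.altW t s 2)
        have e1 : S.altW s t 2 = [s, t] := rfl
        have e2 : S.altW t s 2 = [t, s] := rfl
        rw [e1, e2]
        simp only [wordProd, List.map_cons, List.map_nil, List.prod_cons, List.prod_nil, mul_one]
        exact S.braid2 hst' hts'
    · have hb1 : 1 ≤ b := by omega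
      have ha0 : ¬ a = 0 := fun h => hb0 (hiff.1 h)
      have ha1 : 1 ≤ a := by omega
      have hab3 : a * b ≤ 3 := by omega
      have ha3 : a ≤ 3 := by nlinarith
      have hb3 : b ≤ 3 := by nlinarith
      have hcase : (a = 1 ∧ b = 1) ∨ (a = 1 ∧ b = 2) ∨ (a = 2 ∧ b = 1) ∨
          (a = 1 ∧ b = 3) ∨ (a = 3 ∧ b = 1) := by
        interval_cases a <;> interval_cases b <;> omega
      have hAst : S.A s t = -a := by omega
      have hAts : S.A t s = -b := by omega
      rcases hcase with ⟨ra, rb⟩ | ⟨ra, rb⟩ | ⟨ra, rb⟩ | ⟨ra, rb⟩ | ⟨ra, rb⟩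
      · -- (1,1), m = 3
        rcases Nat.lt_or_ge n 3 with hn | hn
        · refine Or.inl (hpos ?_ ?_) <;> rw [ra, rb] <;> interval_cases n <;> decide
        · refine Or.inr (S.shorten s t 3 n (by norm_num) hn ?_)
          have e1 : S.altW s t 3 = [t, s, t] := rfl
          have e2 : S.altW t s 3 = [s, t, s] := rfl
          rw [e1, e2]
          simp only [wordProd, List.map_cons, List.map_nil, List.prod_cons, List.prod_nil,
            mul_one, ← mul_assoc]
          exact S.braid3 (by omega) (by omega)
      · -- (1,2), m = 4
        rcases Nat.lt_or_ge n 4 with hn | hn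
        · refine Or.inl (hpos ?_ ?_) <;> rw [ra, rb] <;> interval_cases n <;> decide
        · refine Or.inr (S.shorten s t 4 n (by norm_num) hn ?_)
          have e1 : S.altW s t 4 = [s, t, s, t] := rfl
          have e2 : S.altW t s 4 = [t, s, t, s] := rfl
          rw [e1, e2]
          simp only [wordProd, List.map_cons, List.map_nil, List.prod_cons, List.prod_nil,
            mul_one, ← mul_assoc]
          exact S.braid4 (by omega) (by omega)
      · -- (2,1), m = 4
        rcases Nat.lt_or_ge n 4 with hn | hn
        · refine Or.inl (hpos ?_ ?_) <;> rw [ra, rb] <;> interval_cases n <;> decide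
        · refine Or.inr (S.shorten s t 4 n (by norm_num) hn ?_)
          have e1 : S.altW s t 4 = [s, t, s, t] := rfl
          have e2 : S.altW t s 4 = [t, s, t, s] := rfl
          rw [e1, e2]
          simp only [wordProd, List.map_cons, List.map_nil, List.prod_cons, List.prod_nil,
            mul_one, ← mul_assoc]
          exact (S.braid4 (by omega) (by omega)).symm
      · -- (1,3), m = 6
        rcases Nat.lt_or_ge n 6 with hn | hn
        · refine Or.inl (hpos ?_ ?_) <;> rw [ra, rb] <;> interval_cases n <;> decide
        · refine Or.inr (S.shorten s t 6 n (by norm_num) hn ?_)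
          have e1 : S.altW s t 6 = [s, t, s, t, s, t] := rfl
          have e2 : S.altW t s 6 = [t, s, t, s, t, s] := rfl
          rw [e1, e2]
          simp only [wordProd, List.map_cons, List.map_nil, List.prod_cons, List.prod_nil,
            mul_one, ← mul_assoc]
          exact S.braid6 (by omega) (by omega)
      · -- (3,1), m = 6
        rcases Nat.lt_or_ge n 6 with hn | hn
        · refine Or.inl (hpos ?_ ?_) <;> rw [ra, rb] <;> interval_cases n <;> decide
        · refine Or.inr (S.shorten s t 6 n (by norm_num) hn ?_)
          have e1 : S.altW s t 6 = [s, t, s, t, s, t] := rfl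
          have e2 : S.altW t s 6 = [t, s, t, s, t, s] := rfl
          rw [e1, e2]
          simp only [wordProd, List.map_cons, List.map_nil, List.prod_cons, List.prod_nil,
            mul_one, ← mul_assoc]
          exact (S.braid6 (by omega) (by omega)).symm

end Rank2


/-! ### Descent chains and the positivity theorem -/

section L1

variable (S : GCMRealization)

lemma ap_add (u : S.U) (x y : S.E) : S.ap u (x + y) = S.ap u x + S.ap u y :=
  map_add u.val x y

lemma ap_smul (u : S.U) (r : ℝ) (x : S.E) : S.ap u (r • x) = r • S.ap u x :=
  map_smul u.val r x

lemma ap_neg (u : S.U) (x : S.E) : S.ap u (-x) = -S.ap u x :=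
  map_neg u.val x

lemma ap_zero (u : S.U) : S.ap u 0 = 0 := map_zero u.val

lemma ap_inv_ap (u : S.U) (x : S.E) : S.ap u⁻¹ (S.ap u x) = x := by
  rw [← S.ap_mul, inv_mul_cancel, S.ap_one]

lemma ap_injective {u : S.U} {x y : S.E} (h : S.ap u x = S.ap u y) : x = y := by
  have := congrArg (S.ap u⁻¹) h
  rwa [S.ap_inv_ap, S.ap_inv_ap] at this

lemma root_ne_zero (s : S.I) : S.root s ≠ 0 := S.root_indep.ne_zero s

lemma chain (N : ℕ) : ∀ w ∈ S.W, S.length w ≤ N → ∀ s t : S.I, s ≠ t →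
    S.length (w * S.sUnit t) < S.length w →
    ∃ v ∈ S.W, ∃ n, 1 ≤ n ∧ w = v * S.wordProd (S.altW s t n) ∧
      S.length w = S.length v + n ∧
      S.length v ≤ S.length (v * S.sUnit s) ∧ S.length v ≤ S.length (v * S.sUnit t) := by
  induction N with
  | zero => intro w _ hw s t _ hd; omega
  | succ N ih =>
    intro w hwW hw s t hst hd
    set w₁ := w * S.sUnit t with hw₁
    have hw₁W : w₁ ∈ S.W := mul_mem hwW (S.sUnit_mem_W t)
    have hww : w = w₁ * S.sUnit t := by
      rw [hw₁, mul_assoc, S.sUnit_mul_self, mul_one]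
    have hlw : S.length w = S.length w₁ + 1 := by
      have := S.length_mul_sUnit_le hw₁W t
      rw [← hww] at this
      omega
    by_cases hc : S.length (w₁ * S.sUnit s) < S.length w₁
    · obtain ⟨v, hvW, n, hn1, heq, hlen, hvt, hvs⟩ :=
        ih w₁ hw₁W (by omega) t s hst.symm hc
      refine ⟨v, hvW, n + 1, by omega, ?_, by omega, hvs, hvt⟩
      rw [hww, heq, S.altW_succ, S.wordProd_concat, mul_assoc]
    · refine ⟨w₁, hw₁W, 1, le_rfl, ?_, by omega, by omega, ?_⟩
      · rw [show S.altW s t 1 = [t] from rfl, S.wordProd_singleton, ← hww]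
      · rw [← hww]; omega

theorem posL1 (N : ℕ) : ∀ w ∈ S.W, S.length w ≤ N → ∀ s : S.I,
    S.length w ≤ S.length (w * S.sUnit s) → S.ap w (S.root s) ∈ posCone S.root := by
  induction N with
  | zero =>
    intro w hwW hw s _
    have : w = 1 := S.eq_one_of_length_eq_zero hwW (by omega)
    rw [this, S.ap_one]
    exact self_mem_posCone S.root s
  | succ N ih =>
    intro w hwW hw s hs
    by_cases h0 : S.length w = 0
    · have : w = 1 := S.eq_one_of_length_eq_zero hwW h0
      rw [this, S.ap_one]
      exact self_mem_posCone S.root s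
    · obtain ⟨l, hl, hlen⟩ := S.exists_reduced_word hwW
      have hlne : l ≠ [] := by
        intro h; rw [h] at hlen; simp at hlen; omega
      set t := l.getLast hlne with ht_def
      have hdrop : w * S.sUnit t = S.wordProd l.dropLast := by
        have hsplit : l.dropLast ++ [t] = l := List.dropLast_append_getLast hlne
        have h2 : S.wordProd l = S.wordProd l.dropLast * S.sUnit t := by
          conv_lhs => rw [← hsplit]
          rw [S.wordProd_concat]
        rw [← hl, h2, mul_assoc, S.sUnit_mul_self, mul_one]
      have hdt : S.length (w * S.sUnit t) < S.length w := by
        have h1 : S.length (w * S.sUnit t) ≤ l.dropLast.length :=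
          S.length_le_word hdrop.symm
        have h2 : l.dropLast.length = l.length - 1 := by simp
        omega
      have hst : s ≠ t := by
        intro h; rw [← h] at hdt; omega
      obtain ⟨v, hvW, n, hn1, heq, hlen2, hvs, hvt⟩ :=
        S.chain (N + 1) w hwW hw s t hst hdt
      have hvN : S.length v ≤ N := by omega
      have hcs : S.ap v (S.root s) ∈ posCone S.root := ih v hvW hvN s hvs
      have hct : S.ap v (S.root t) ∈ posCone S.root := ih v hvW hvN t hvt
      rcases S.rank2_alternative s t hst n with ⟨p, q, hp, hq, hco⟩ | ⟨l', hl'len, hl'prod⟩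
      · rw [heq, S.ap_mul, hco, S.ap_add, S.ap_smul, S.ap_smul]
        exact add_mem_posCone (smul_mem_posCone hp hcs) (smul_mem_posCone hq hct)
      · exfalso
        have : w * S.sUnit s = v * S.wordProd l' := by
          rw [heq, mul_assoc, ← hl'prod]
        have hb : S.length (w * S.sUnit s) ≤ S.length v + l'.length := by
          rw [this]; exact S.length_mul_word_le hvW l'
        omega

lemma ap_root_mem_posCone {w : S.U} (hwW : w ∈ S.W) {s : S.I}
    (h : S.length w ≤ S.length (w * S.sUnit s)) : S.ap w (S.root s) ∈ posCone S.root :=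
  S.posL1 (S.length w) w hwW le_rfl s h

lemma ap_root_neg_of_descent {w : S.U} (hwW : w ∈ S.W) {s : S.I}
    (h : S.length (w * S.sUnit s) < S.length w) :
    ∃ c : S.I → ℝ, (∀ i, 0 ≤ c i) ∧ S.ap w (S.root s) = -∑ i, c i • S.root i := by
  have hws : w * S.sUnit s ∈ S.W := mul_mem hwW (S.sUnit_mem_W s)
  have h2 : S.length (w * S.sUnit s) ≤ S.length (w * S.sUnit s * S.sUnit s) := by
    rw [mul_assoc, S.sUnit_mul_self, mul_one]; omega
  have := S.ap_root_mem_posCone hws h2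
  obtain ⟨c, hc, hrep⟩ := this
  have key : S.ap (w * S.sUnit s) (S.root s) = -S.ap w (S.root s) := by
    rw [S.ap_mul, S.ap_sUnit]
    have : S.coroot s (S.root s) = 2 := by rw [S.pairing, S.diag]; norm_num
    rw [this, show (root S s - (2:ℝ) • S.root s) = -S.root s by module, S.ap_neg]
  rw [key] at hrep
  exact ⟨c, hc, by rw [← hrep]; simp⟩

lemma length_lt_of_pos {w : S.U} (hwW : w ∈ S.W) {s : S.I}
    (h : S.ap w (S.root s) ∈ posCone S.root) : S.length w < S.length (w * S.sUnit s) := by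
  by_contra hcon
  push_neg at hcon
  have hws : w * S.sUnit s ∈ S.W := mul_mem hwW (S.sUnit_mem_W s)
  have h2 : S.length (w * S.sUnit s) ≤ S.length (w * S.sUnit s * S.sUnit s) := by
    rw [mul_assoc, S.sUnit_mul_self, mul_one]; exact hcon
  have hmem := S.ap_root_mem_posCone hws h2
  have key : S.ap (w * S.sUnit s) (S.root s) = -S.ap w (S.root s) := by
    rw [S.ap_mul, S.ap_sUnit]
    have h2' : S.coroot s (S.root s) = 2 := by rw [S.pairing, S.diag]; norm_num
    rw [h2', show (root S s - (2:ℝ) • S.root s) = -S.root s by module, S.ap_neg]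
  rw [key] at hmem
  have := eq_zero_of_mem_posCone_of_neg_mem S.root_indep h hmem
  have : S.root s = 0 := by
    have h0 : S.ap w (S.root s) = S.ap w 0 := by rw [this, S.ap_zero]
    exact S.ap_injective h0
  exact S.root_ne_zero s this

lemma descent_iff {w : S.U} (hwW : w ∈ S.W) (s : S.I) :
    S.length w ≤ S.length (w * S.sUnit s) ↔ S.ap w (S.root s) ∈ posCone S.root := by
  constructor
  · exact S.ap_root_mem_posCone hwW
  · intro h; exact le_of_lt (S.length_lt_of_pos hwW h)

end L1



/-! ### The dual realization -/

/-- The dual realization, on the dual space with the transposed matrix. -/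
@[reducible] noncomputable def dual (S : GCMRealization) : GCMRealization where
  I := S.I
  E := Module.Dual ℝ S.E
  A := fun i j => S.A j i
  diag := fun i => S.diag i
  offDiag_nonpos := fun i j h => S.offDiag_nonpos j i (Ne.symm h)
  zero_iff := fun i j => S.zero_iff j i
  root := S.coroot
  coroot := fun i => Module.Dual.eval ℝ S.E (S.root i)
  root_indep := S.coroot_indep
  coroot_indep := by
    have := S.root_indep.map' (Module.Dual.eval ℝ S.E) (Module.eval_ker ℝ S.E)
    exact this
  pairing := fun i j => by
    simp only [Module.Dual.eval_apply]
    exact S.pairing j i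

section Dual

variable (S : GCMRealization)

lemma dual_root (i : S.I) : (S.dual).root i = S.coroot i := rfl

lemma ap_ap_inv (u : S.U) (x : S.E) : S.ap u (S.ap u⁻¹ x) = x := by
  rw [← S.ap_mul, mul_inv_cancel, S.ap_one]

/-- The contragredient homomorphism from `GL(E)` to `GL(E*)`. -/
noncomputable def dualHom : S.U →* (S.dual).U where
  toFun u :=
    { val := LinearMap.dualMap (↑u⁻¹ : S.E →ₗ[ℝ] S.E)
      inv := LinearMap.dualMap (↑u : S.E →ₗ[ℝ] S.E)
      val_inv := by
        refine LinearMap.ext fun φ => LinearMap.ext fun x => ?_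
        simp only [Module.End.mul_apply, LinearMap.dualMap_apply, Module.End.one_apply]
        exact congrArg φ (S.ap_ap_inv u x)
      inv_val := by
        refine LinearMap.ext fun φ => LinearMap.ext fun x => ?_
        simp only [Module.End.mul_apply, LinearMap.dualMap_apply, Module.End.one_apply]
        exact congrArg φ (S.ap_inv_ap u x) }
  map_one' := by
    refine Units.ext (LinearMap.ext fun φ => LinearMap.ext fun x => ?_)
    simp
  map_mul' u v := by
    refine Units.ext (LinearMap.ext fun φ => LinearMap.ext fun x => ?_)
    simp only [Units.val_mul, Module.End.mul_apply, LinearMap.dualMap_apply, mul_inv_rev,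
      Units.val_mul]

lemma dualHom_ap (u : S.U) (f : Module.Dual ℝ S.E) (x : S.E) :
    ((S.dualHom u).val f) x = f (S.ap u⁻¹ x) := rfl

lemma dualHom_sUnit (i : S.I) : S.dualHom (S.sUnit i) = (S.dual).sUnit i := by
  refine Units.ext (LinearMap.ext fun φ => LinearMap.ext fun x => ?_)
  rw [S.dualHom_ap, S.sUnit_inv, S.ap_sUnit]
  show φ (x - S.coroot i x • S.root i) = ((S.dual).sMap i φ) x
  rw [(S.dual).sMap_apply]
  show φ (x - S.coroot i x • S.root i)
    = φ x - ((Module.Dual.eval ℝ S.E (S.root i)) φ • S.coroot i) x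
  simp only [map_sub, map_smul, smul_eq_mul, Module.Dual.eval_apply, LinearMap.smul_apply]
  ring

lemma dualHom_injective : Function.Injective S.dualHom := by
  intro u v h
  have key : ∀ x, S.ap u⁻¹ x = S.ap v⁻¹ x := by
    intro x
    have h3 : ∀ φ : Module.Dual ℝ S.E, φ (S.ap u⁻¹ x - S.ap v⁻¹ x) = 0 := by
      intro φ
      have h2 : ((S.dualHom u).val φ) x = ((S.dualHom v).val φ) x := by rw [h]
      rw [S.dualHom_ap, S.dualHom_ap] at h2
      rw [map_sub, h2, sub_self]
    have := (Module.forall_dual_apply_eq_zero_iff ℝ _).1 h3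
    exact sub_eq_zero.1 this
  have huv : u⁻¹ = v⁻¹ := Units.ext (LinearMap.ext key)
  exact inv_injective huv

lemma dualHom_wordProd (l : List S.I) :
    S.dualHom (S.wordProd l) = (S.dual).wordProd l := by
  induction l with
  | nil => simp [wordProd_nil, map_one]
  | cons i l ih =>
    rw [S.wordProd_cons, map_mul, ih, S.dualHom_sUnit, (S.dual).wordProd_cons]

lemma dualHom_length (u : S.U) : (S.dual).length (S.dualHom u) = S.length u := by
  unfold length
  congr 1
  ext n
  constructor
  · rintro ⟨l, hlen, hprod⟩
    refine ⟨l, hlen, S.dualHom_injective ?_⟩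
    rw [S.dualHom_wordProd, hprod]
  · rintro ⟨l, hlen, hprod⟩
    exact ⟨l, hlen, by rw [← S.dualHom_wordProd, hprod]⟩

lemma dualHom_mem_W {u : S.U} (hu : u ∈ S.W) : S.dualHom u ∈ (S.dual).W := by
  obtain ⟨l, rfl⟩ := S.mem_W_iff.1 hu
  rw [S.dualHom_wordProd]
  exact (S.dual).wordProd_mem_W l

/-- On a right descent, the pulled-back coroot is nonpositive on the chamber. -/
lemma coroot_ap_inv_nonpos {w : S.U} (hwW : w ∈ S.W) {t : S.I}
    (h : S.length (w * S.sUnit t) < S.length w) {z : S.E} (hz : z ∈ S.chamber) :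
    S.coroot t (S.ap w⁻¹ z) ≤ 0 := by
  have hW' : S.dualHom w ∈ (S.dual).W := S.dualHom_mem_W hwW
  have hlen : (S.dual).length (S.dualHom w * (S.dual).sUnit t)
      < (S.dual).length (S.dualHom w) := by
    rw [← S.dualHom_sUnit, ← map_mul, S.dualHom_length, S.dualHom_length]
    exact h
  obtain ⟨c, hc, hrep⟩ := (S.dual).ap_root_neg_of_descent hW' hlen
  have heval := congrArg (fun f : Module.Dual ℝ S.E => f z) hrep
  have hL : (S.dual).ap (S.dualHom w) ((S.dual).root t) z = S.coroot t (S.ap w⁻¹ z) :=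
    S.dualHom_ap w (S.coroot t) z
  simp only at heval
  rw [hL] at heval
  rw [heval]
  have hR : ((-∑ i, c i • (S.dual).root i : Module.Dual ℝ S.E)) z
      = -∑ i, c i * S.coroot i z := by
    simp [dual_root, LinearMap.sum_apply, LinearMap.smul_apply, smul_eq_mul]
  rw [hR]
  simp only [neg_nonpos]
  exact Finset.sum_nonneg fun i _ => mul_nonneg (hc i) (hz i)

end Dual


/-! ### Fundamental domain and parabolic subgroups -/

section FD

variable (S : GCMRealization)

lemma ap_sum_smul (u : S.U) (c : S.I → ℝ) (v : S.I → S.E) :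
    S.ap u (∑ i, c i • v i) = ∑ i, c i • S.ap u (v i) := by
  unfold ap
  rw [map_sum]
  simp [map_smul]

lemma exists_descent_of_reduced {v : S.U} (hv : v ∈ S.W) (h : S.length v ≠ 0) :
    ∃ t : S.I, S.length (v * S.sUnit t) < S.length v := by
  obtain ⟨l, hl, hlen⟩ := S.exists_reduced_word hv
  have hlne : l ≠ [] := by
    intro hh; rw [hh] at hlen; simp at hlen; omega
  refine ⟨l.getLast hlne, ?_⟩
  have hsplit : l.dropLast ++ [l.getLast hlne] = l := List.dropLast_append_getLast hlne
  have h2 : S.wordProd l = S.wordProd l.dropLast * S.sUnit (l.getLast hlne) := by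
    conv_lhs => rw [← hsplit]
    rw [S.wordProd_concat]
  have hdrop : v * S.sUnit (l.getLast hlne) = S.wordProd l.dropLast := by
    rw [← hl, h2, mul_assoc, S.sUnit_mul_self, mul_one]
  have h1 : S.length (v * S.sUnit (l.getLast hlne)) ≤ l.dropLast.length :=
    S.length_le_word hdrop.symm
  have h2' : l.dropLast.length = l.length - 1 := by simp
  omega

theorem fund_domain_aux (N : ℕ) : ∀ v ∈ S.W, S.length v ≤ N →
    ∀ y z : S.E, y ∈ S.chamber → z ∈ S.chamber → S.ap v y = z →
    z = y ∧ v ∈ S.WJ {i | S.coroot i y = 0} := by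
  induction N with
  | zero =>
    intro v hv hlen y z hy hz hvy
    have h1 : v = 1 := S.eq_one_of_length_eq_zero hv (by omega)
    rw [h1, S.ap_one] at hvy
    refine ⟨hvy.symm, ?_⟩
    rw [h1]
    exact one_mem _
  | succ N ih =>
    intro v hv hlen y z hy hz hvy
    by_cases h0 : S.length v = 0
    · have h1 : v = 1 := S.eq_one_of_length_eq_zero hv h0
      rw [h1, S.ap_one] at hvy
      refine ⟨hvy.symm, ?_⟩
      rw [h1]
      exact one_mem _
    · obtain ⟨t, ht⟩ := S.exists_descent_of_reduced hv h0
      have hyz : y = S.ap v⁻¹ z := by rw [← hvy, S.ap_inv_ap]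
      have hle : S.coroot t y ≤ 0 := by
        rw [hyz]; exact S.coroot_ap_inv_nonpos hv ht hz
      have h0' : S.coroot t y = 0 := le_antisymm hle (hy t)
      have hfix : S.ap (S.sUnit t) y = y := S.ap_sUnit_fix h0'
      set v' := v * S.sUnit t with hv'
      have hv'W : v' ∈ S.W := mul_mem hv (S.sUnit_mem_W t)
      have hv'y : S.ap v' y = z := by
        rw [hv', S.ap_mul, hfix, hvy]
      obtain ⟨hzy, hmem⟩ := ih v' hv'W (by omega) y z hy hz hv'y
      refine ⟨hzy, ?_⟩
      have : v = v' * S.sUnit t := by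
        rw [hv', mul_assoc, S.sUnit_mul_self, mul_one]
      rw [this]
      exact mul_mem hmem (Subgroup.subset_closure ⟨t, h0', rfl⟩)

theorem fund_domain {v : S.U} (hv : v ∈ S.W) {y z : S.E} (hy : y ∈ S.chamber)
    (hz : z ∈ S.chamber) (hvy : S.ap v y = z) :
    z = y ∧ v ∈ S.WJ {i | S.coroot i y = 0} :=
  S.fund_domain_aux (S.length v) v hv le_rfl y z hy hz hvy

/-- Support of the image of a simple root under an element of a standard
parabolic subgroup. -/
lemma parabolic_support_aux (Q : Set S.I) (t : S.I) (l : List S.I) (hlQ : ∀ i ∈ l, i ∈ Q) :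
    ∃ c : S.I → ℝ, (∀ i, i ∉ Q → i ≠ t → c i = 0) ∧ (t ∉ Q → c t = 1) ∧
      S.ap (S.wordProd l) (S.root t) = ∑ i, c i • S.root i := by
  induction l with
  | nil =>
    refine ⟨fun i => if i = t then 1 else 0, ?_, ?_, ?_⟩
    · intro i _ hit; simp [hit]
    · intro _; simp
    · rw [wordProd_nil, ap_one]
      simp [ite_smul]
  | cons q l ihl =>
    obtain ⟨c, hc0, hct, hrep⟩ := ihl (fun i hi => hlQ i (by simp [hi]))
    have hqQ : q ∈ Q := hlQ q (by simp)
    set κ := S.coroot q (∑ i, c i • S.root i) with hκ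
    refine ⟨fun i => c i - (if i = q then κ else 0), ?_, ?_, ?_⟩
    · intro i hiQ hit
      have : i ≠ q := fun h => hiQ (h ▸ hqQ)
      simp [this, hc0 i hiQ hit]
    · intro htQ
      have : t ≠ q := fun h => htQ (h ▸ hqQ)
      simp [this, hct htQ]
    · rw [S.wordProd_cons, S.ap_mul, hrep, S.ap_sUnit, ← hκ]
      have : ∑ i, (c i - if i = q then κ else 0) • S.root i
          = ∑ i, c i • S.root i - ∑ i, (if i = q then κ else 0) • S.root i := by
        rw [← Finset.sum_sub_distrib]
        congr 1; funext i; rw [sub_smul]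
      rw [this]
      congr 1
      simp only [ite_smul, zero_smul]
      rw [Finset.sum_ite_eq' Finset.univ q (fun i => κ • S.root i)]
      simp

lemma parabolic_support {Q : Set S.I} {w : S.U} (hw : w ∈ S.WJ Q) (t : S.I) :
    ∃ c : S.I → ℝ, (∀ i, i ∉ Q → i ≠ t → c i = 0) ∧ (t ∉ Q → c t = 1) ∧
      S.ap w (S.root t) = ∑ i, c i • S.root i := by
  obtain ⟨l, hlQ, rfl⟩ := S.mem_WJ_iff.1 hw
  exact S.parabolic_support_aux Q t l hlQ

/-- Any reduced word of an element of a standard parabolic subgroup has all its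
letters in the generating set. -/
lemma reduced_word_letters {Q : Set S.I} :
    ∀ N : ℕ, ∀ w ∈ S.WJ Q, ∀ l : List S.I, S.wordProd l = w → l.length = S.length w →
      l.length ≤ N → ∀ i ∈ l, i ∈ Q := by
  intro N
  induction N with
  | zero =>
    intro w _ l _ _ hN i hi
    have : l = [] := List.length_eq_zero_iff.1 (by omega)
    rw [this] at hi
    simp at hi
  | succ N ih =>
    intro w hw l hprod hlen hN i hi
    have hwW : w ∈ S.W := S.WJ_le_W Q hw
    rcases List.eq_nil_or_concat l with rfl | ⟨l', t, hcat⟩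
    · simp at hi
    · rw [List.concat_eq_append] at hcat
      subst hcat
      have hlenl : l'.length + 1 = S.length w := by
        simpa using hlen
      have hprod' : S.wordProd l' * S.sUnit t = w := by
        rw [← S.wordProd_concat]; exact hprod
      have hdrop : w * S.sUnit t = S.wordProd l' := by
        rw [← hprod', mul_assoc, S.sUnit_mul_self, mul_one]
      have hlt : S.length (w * S.sUnit t) < S.length w := by
        have h1 : S.length (w * S.sUnit t) ≤ l'.length := S.length_le_word hdrop.symm
        omega
      have htQ : t ∈ Q := by
        by_contra htQ
        obtain ⟨c, hc0, hct, hrep⟩ := S.parabolic_support hw t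
        obtain ⟨d, hd, hrep'⟩ := S.ap_root_neg_of_descent hwW hlt
        have : ∑ i, c i • S.root i = ∑ i, (-d) i • S.root i := by
          rw [← hrep, hrep']
          simp [neg_smul]
        have hcd := coords_unique S.root_indep this
        have h1 : c t = 1 := hct htQ
        have h2 : c t = -d t := congrFun hcd t
        have := hd t
        rw [h1] at h2
        linarith
      have hw' : w * S.sUnit t ∈ S.WJ Q :=
        mul_mem hw (Subgroup.subset_closure ⟨t, htQ, rfl⟩)
      have hlen' : l'.length = S.length (w * S.sUnit t) := by
        have h1 : S.length (w * S.sUnit t) ≤ l'.length := S.length_le_word hdrop.symm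
        have h2 := S.length_le_mul_sUnit hwW t
        omega
      rcases List.mem_append.1 hi with hi' | hi'
      · exact ih (w * S.sUnit t) hw' l' hdrop.symm hlen' (by simp at hN; omega) i hi'
      · simp at hi'
        rw [hi']
        exact htQ

lemma red_subset_of_mem_WJ {Q : Set S.I} {σ : S.U} (hσ : σ ∈ S.WJ Q) :
    S.red σ ⊆ Q := by
  rintro i ⟨l, ⟨hprod, hlen⟩, hi⟩
  exact S.reduced_word_letters l.length σ hσ l hprod hlen le_rfl i hi

/-- Length is additive on products `p * v` where `p` has no right `P`-descents
and `v` lies in the standard parabolic `W_P`. -/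
lemma length_add_of_no_descents {P : Set S.I} {p : S.U} (hp : p ∈ S.W)
    (hd : ∀ k ∈ P, S.length p ≤ S.length (p * S.sUnit k)) :
    ∀ N : ℕ, ∀ v ∈ S.WJ P, S.length v ≤ N →
      S.length (p * v) = S.length p + S.length v := by
  intro N
  induction N with
  | zero =>
    intro v hv hlen
    have : v = 1 := S.eq_one_of_length_eq_zero (S.WJ_le_W P hv) (by omega)
    rw [this, mul_one, S.length_one]
    omega
  | succ N ih =>
    intro v hv hlen
    by_cases h0 : S.length v = 0
    · have : v = 1 := S.eq_one_of_length_eq_zero (S.WJ_le_W P hv) h0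
      rw [this, mul_one, S.length_one]
      omega
    · have hvW : v ∈ S.W := S.WJ_le_W P hv
      obtain ⟨l, hl, hllen⟩ := S.exists_reduced_word hvW
      have hlne : l ≠ [] := by
        intro hh; rw [hh] at hllen; simp at hllen; omega
      obtain ⟨l', t, rfl⟩ : ∃ l' t, l = l' ++ [t] := by
        rcases List.eq_nil_or_concat l with rfl | ⟨l', t, hcat⟩
        · exact absurd rfl hlne
        · rw [List.concat_eq_append] at hcat
          exact ⟨l', t, hcat⟩
      have htQ : t ∈ P := S.reduced_word_letters (l' ++ [t]).length v hv _ hl hllen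
        le_rfl t (by simp)
      have hdrop : v * S.sUnit t = S.wordProd l' := by
        rw [← hl, S.wordProd_concat, mul_assoc, S.sUnit_mul_self, mul_one]
      set v' := v * S.sUnit t with hv'def
      have hv'W : v' ∈ S.W := mul_mem hvW (S.sUnit_mem_W t)
      have hv'P : v' ∈ S.WJ P := mul_mem hv (Subgroup.subset_closure ⟨t, htQ, rfl⟩)
      have hvv' : v = v' * S.sUnit t := by
        rw [hv'def, mul_assoc, S.sUnit_mul_self, mul_one]
      have hlv' : S.length v' = S.length v - 1 ∧ 1 ≤ S.length v := by
        have h1 : S.length v' ≤ l'.length := S.length_le_word hdrop.symm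
        have h2 : S.length v ≤ S.length v' + 1 := by
          rw [hv'def]
          exact S.length_le_mul_sUnit hvW t
        have h3 : (l' ++ [t]).length = l'.length + 1 := by simp
        omega
      have ihv' := ih v' hv'P (by omega)
      -- v' α_t is in the positive cone, supported in P
      have hpos : S.ap v' (S.root t) ∈ posCone S.root := by
        apply S.ap_root_mem_posCone hv'W
        rw [← hvv']
        omega
      obtain ⟨d, hdpos, hdrep⟩ := hpos
      obtain ⟨c, hc0, -, hcrep⟩ := S.parabolic_support hv'P t
      have hcd : c = d := coords_unique S.root_indep (by rw [← hcrep, ← hdrep])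
      have hd0 : ∀ i, i ∉ P → d i = 0 := by
        intro i hiP
        rw [← hcd]
        exact hc0 i hiP (fun h => hiP (h ▸ htQ))
      have hppos : S.ap (p * v') (S.root t) ∈ posCone S.root := by
        rw [S.ap_mul, hdrep, S.ap_sum_smul]
        refine sum_mem_posCone Finset.univ _ fun i _ => ?_
        by_cases hiP : i ∈ P
        · exact smul_mem_posCone (hdpos i) (S.ap_root_mem_posCone hp (hd i hiP))
        · rw [hd0 i hiP, zero_smul]
          exact zero_mem_posCone S.root
      have hlt : S.length (p * v') < S.length (p * v' * S.sUnit t) :=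
        S.length_lt_of_pos (mul_mem hp hv'W) hppos
      have hfin : p * v' * S.sUnit t = p * v := by
        rw [mul_assoc, ← hvv']
      rw [hfin] at hlt
      have hub : S.length (p * v) ≤ S.length (p * v') + 1 := by
        rw [← hfin]
        exact S.length_mul_sUnit_le (mul_mem hp hv'W) t
      omega

/-- Decomposition along right `P`-descents. -/
lemma descent_decomp {P : Set S.I} :
    ∀ N : ℕ, ∀ σ ∈ S.W, S.length σ ≤ N →
      ∃ p ∈ S.W, ∃ l : List S.I, (∀ i ∈ l, i ∈ P) ∧ σ = p * S.wordProd l ∧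
        S.length σ = S.length p + l.length ∧
        ∀ k ∈ P, S.length p ≤ S.length (p * S.sUnit k) := by
  intro N
  induction N with
  | zero =>
    intro σ hσ hlen
    refine ⟨σ, hσ, [], by simp, by rw [wordProd_nil, mul_one], by simp [wordProd_nil], ?_⟩
    intro k _
    omega
  | succ N ih =>
    intro σ hσ hlen
    by_cases hex : ∃ k ∈ P, S.length (σ * S.sUnit k) < S.length σ
    · obtain ⟨k, hkP, hk⟩ := hex
      have hσk : σ * S.sUnit k ∈ S.W := mul_mem hσ (S.sUnit_mem_W k)
      obtain ⟨p, hpW, l, hlP, heq, hleneq, hnod⟩ := ih (σ * S.sUnit k) hσk (by omega)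
      refine ⟨p, hpW, l ++ [k], ?_, ?_, ?_, hnod⟩
      · intro i hi
        rcases List.mem_append.1 hi with h | h
        · exact hlP i h
        · simp at h; rw [h]; exact hkP
      · rw [S.wordProd_concat, ← mul_assoc, ← heq, mul_assoc, S.sUnit_mul_self, mul_one]
      · have h1 : S.length σ ≤ S.length (σ * S.sUnit k) + 1 := S.length_le_mul_sUnit hσ k
        simp only [List.length_append, List.length_cons, List.length_nil]
        omega
    · push_neg at hex
      refine ⟨σ, hσ, [], by simp, by rw [wordProd_nil, mul_one], by simp [wordProd_nil], hex⟩

end FD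


/-! ### Final assembly -/

section Assembly

variable (S : GCMRealization)

lemma WJ_mono {Q Q' : Set S.I} (h : Q ⊆ Q') : S.WJ Q ≤ S.WJ Q' :=
  Subgroup.closure_mono (Set.image_mono h)

lemma wordProd_fix {l : List S.I} {x : S.E} (h : ∀ i ∈ l, S.coroot i x = 0) :
    S.ap (S.wordProd l) x = x := by
  induction l with
  | nil => rw [wordProd_nil, ap_one]
  | cons i l ih =>
    rw [S.wordProd_cons, S.ap_mul, ih fun j hj => h j (by simp [hj]),
      S.ap_sUnit_fix (h i (by simp))]

end Assembly

/-- For `Θ ⊆ I` special, `J ⊆ I`, and a minimal length double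
coset representative `σ ∈ ^{Θ∪Θ⊥}W^J`:
`R(Θ) ∩ σF̄_J = F̄_{Θ∪J∪red(σ)}`. -/
theorem face_inter_closed_facet (S : GCMRealization) (Θ J : Set S.I)
    (hΘ : S.special Θ) (σ : S.U)
    (hσ : σ ∈ S.minDouble (Θ ∪ S.perp Θ) J) :
    S.faceR Θ ∩ S.ap σ '' S.closedFacet J = S.closedFacet (Θ ∪ J ∪ S.red σ) := by
  have hσW : σ ∈ S.W := hσ.1
  ext x
  constructor
  · rintro ⟨⟨w, hw, y, hy, hxw⟩, z, hz, hxz⟩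
    have hwW : w ∈ S.W := S.WJ_le_W _ hw
    have hyc : y ∈ S.chamber := S.closedFacet_subset_chamber Θ hy
    have hzc : z ∈ S.chamber := S.closedFacet_subset_chamber J hz
    set v := σ⁻¹ * w with hv_def
    have hveq : S.ap v y = z := by
      have h1 : S.ap σ⁻¹ (S.ap σ z) = S.ap σ⁻¹ (S.ap w y) := by rw [hxz, ← hxw]
      rw [S.ap_inv_ap] at h1
      rw [hv_def, S.ap_mul, ← h1]
    set P : Set S.I := {i | S.coroot i y = 0} with hP_def
    obtain ⟨hzy, hvP⟩ := S.fund_domain (mul_mem (inv_mem hσW) hwW) hyc hzc hveq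
    obtain ⟨p, hpW, l, hlP, heq, hlen, hnod⟩ := S.descent_decomp (S.length σ) σ hσW le_rfl
    set q := S.wordProd l with hq_def
    have hqP : q ∈ S.WJ P := S.wordProd_mem_WJ hlP
    have hqvP : q * v ∈ S.WJ P := mul_mem hqP hvP
    have hqvW : q * v ∈ S.W := S.WJ_le_W P hqvP
    have hm : w = p * (q * v) := by
      rw [← mul_assoc, ← heq, hv_def, ← mul_assoc, mul_inv_cancel, one_mul]
    have hlw : S.length w = S.length p + S.length (q * v) := by
      rw [hm]
      exact S.length_add_of_no_descents hpW hnod (S.length (q * v)) (q * v) hqvP le_rfl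
    obtain ⟨lp, hlp, hlplen⟩ := S.exists_reduced_word hpW
    obtain ⟨lm, hlm, hlmlen⟩ := S.exists_reduced_word hqvW
    have hconc : S.wordProd (lp ++ lm) = w := by
      rw [S.wordProd_append, hlp, hlm, ← hm]
    have hconclen : (lp ++ lm).length = S.length w := by
      simp only [List.length_append, hlplen, hlmlen]
      omega
    have hlpperp : ∀ i ∈ lp, i ∈ S.perp Θ := fun i hi =>
      S.reduced_word_letters (lp ++ lm).length w hw _ hconc hconclen le_rfl i
        (List.mem_append.2 (Or.inl hi))
    have hpperp : p ∈ S.WJ (S.perp Θ) := by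
      rw [← hlp]
      exact S.wordProd_mem_WJ hlpperp
    have hκ : p⁻¹ ∈ S.WJ (Θ ∪ S.perp Θ) :=
      inv_mem (S.WJ_mono Set.subset_union_right hpperp)
    have hmin := hσ.2 p⁻¹ hκ 1 (one_mem _)
    rw [mul_one] at hmin
    have hp1 : p⁻¹ * σ = q := by
      rw [heq, ← mul_assoc, inv_mul_cancel, one_mul]
    rw [hp1] at hmin
    have hlq : S.length q ≤ l.length := S.length_le_word rfl
    have hp0 : S.length p = 0 := by omega
    have hpone : p = 1 := S.eq_one_of_length_eq_zero hpW hp0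
    have hσP : σ ∈ S.WJ P := by
      rw [heq, hpone, one_mul]
      exact hqP
    have hfix : S.ap σ y = y := by
      obtain ⟨lσ, hlσP, hlσ⟩ := S.mem_WJ_iff.1 hσP
      rw [← hlσ]
      exact S.wordProd_fix fun i hi => hlσP i hi
    have hxy : x = y := by rw [← hxz, hzy, hfix]
    have hredP : S.red σ ⊆ P := S.red_subset_of_mem_WJ hσP
    constructor
    · intro i hi
      rw [hxy]
      rcases hi with hi | hi
      · rcases hi with hi | hi
        · exact hy.1 i hi
        · have := hz.1 i hi
          rwa [hzy] at this
      · exact hredP hi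
    · intro i _
      rw [hxy]
      exact hyc i
  · intro hx
    obtain ⟨lσ, hlσ, hlσlen⟩ := S.exists_reduced_word hσW
    have hred : ∀ i ∈ lσ, S.coroot i x = 0 := fun i hi =>
      hx.1 i (Or.inr ⟨lσ, ⟨hlσ, hlσlen⟩, hi⟩)
    have hfix : S.ap σ x = x := by
      rw [← hlσ]
      exact S.wordProd_fix hred
    have hxch : ∀ i, 0 ≤ S.coroot i x := by
      intro i
      by_cases hi : i ∈ Θ ∪ J ∪ S.red σ
      · rw [hx.1 i hi]
      · exact hx.2 i hi
    constructor
    · refine ⟨1, one_mem _, x, ⟨fun i hi => hx.1 i (Or.inl (Or.inl hi)),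
        fun i _ => hxch i⟩, (S.ap_one x).symm⟩
    · exact ⟨x, ⟨fun i hi => hx.1 i (Or.inl (Or.inr hi)), fun i _ => hxch i⟩, hfix⟩

end GCMRealization
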